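/- Not every binary string is a Papadakis–Webster binary string. Specifically, if B = B_{n−1} B_{n−2} … B_1 B_0 is a Papadakis–Webster binary string of even length n (B_{n−1} being the leading digit), then it cannot happen that B_{n/2} = 1 and B_{n/2−1} = 0; i.e., no even-length PWBS has '1' immediately followed by '0' as its two central digits read from left to right. -/

import Mathlib

/-- Digital reversal of a natural number (in base 10). -/
def rev (D : ℕ) : ℕ := Nat.ofDigits 10 ((Nat.digits 10 D).reverse)

/-- `F` is a Papadakis–Webster integer: `F = E + rev E` where `E = D - rev D`,
for some positive `D` with `D > rev D` such that `E` has the same number of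
decimal digits as `D`. -/
def IsPWI (F : ℕ) : Prop :=
  ∃ D : ℕ, 0 < D ∧ rev D < D ∧
    (Nat.digits 10 (D - rev D)).length = (Nat.digits 10 D).length ∧
    F = (D - rev D) + rev (D - rev D)

/-- `Q` is a Papadakis–Webster binary string: the quotient `F / 99` of a
Papadakis–Webster integer `F`.  Its decimal digit string `B_{n-1} … B_1 B_0`
(with `B_{n-1}` the leading digit) corresponds to the little-endian digit list
`Nat.digits 10 Q`, whose entry at index `i` is `B_i`. -/
def IsPWBS (Q : ℕ) : Prop := ∃ F : ℕ, IsPWI F ∧ Q = F / 99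

open Finset

namespace PW

/-- Borrow sequence when subtracting the digit-reversal (digit `a (k-1-i)`)
from digit `a i`. -/
def borrow (a : ℕ → ℕ) (k : ℕ) : ℕ → ℕ
  | 0 => 0
  | i + 1 => if a i < a (k - 1 - i) + borrow a k i then 1 else 0

lemma borrow_le_one (a : ℕ → ℕ) (k i : ℕ) : borrow a k i ≤ 1 := by
  cases i with
  | zero => simp [borrow]
  | succ j => rw [borrow]; split <;> omega

/-- The `i`-th digit of `D - rev D`, as an integer. -/
def eZ (a : ℕ → ℕ) (k i : ℕ) : ℤ :=
  (a i : ℤ) - a (k - 1 - i) - borrow a k i + 10 * borrow a k (i + 1)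

lemma eZ_nonneg (a : ℕ → ℕ) (k i : ℕ) (ha : ∀ j, a j ≤ 9) : 0 ≤ eZ a k i := by
  have hb := borrow_le_one a k i
  have h2 := ha (k - 1 - i)
  simp only [eZ, borrow]
  split <;> push_cast <;> omega

lemma eZ_le (a : ℕ → ℕ) (k i : ℕ) (ha : ∀ j, a j ≤ 9) : eZ a k i ≤ 9 := by
  have hb := borrow_le_one a k i
  have h1 := ha i
  have h2 := ha (k - 1 - i)
  simp only [eZ, borrow]
  split <;> push_cast <;> omega

lemma ofDigits_int' (l : List ℕ) :
    Nat.ofDigits (10 : ℤ) l = ∑ i ∈ range l.length, (l.getD i 0 : ℤ) * 10 ^ i := by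
  induction l with
  | nil => simp [Nat.ofDigits]
  | cons d t ih =>
    rw [show Nat.ofDigits (10:ℤ) (d :: t) = d + 10 * Nat.ofDigits (10:ℤ) t from rfl]
    simp only [List.length_cons]
    rw [Finset.sum_range_succ']
    simp only [List.getD_cons_succ, List.getD_cons_zero, pow_zero, mul_one]
    rw [ih, Finset.mul_sum]
    have : ∀ i ∈ range t.length, 10 * ((t.getD i 0 : ℤ) * 10 ^ i)
        = (t.getD i 0 : ℤ) * 10 ^ (i + 1) := by
      intro i _; ring
    rw [Finset.sum_congr rfl this]
    ring

lemma ofDigits_int (l : List ℕ) :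
    ((Nat.ofDigits 10 l : ℕ) : ℤ) = ∑ i ∈ range l.length, (l.getD i 0 : ℤ) * 10 ^ i := by
  rw [Nat.coe_ofDigits ℤ]
  exact_mod_cast ofDigits_int' l

lemma getD_reverse {l : List ℕ} {i : ℕ} (h : i < l.length) :
    l.reverse.getD i 0 = l.getD (l.length - 1 - i) 0 := by
  rw [List.getD_eq_getElem _ _ (by simpa using h),
      List.getD_eq_getElem _ _ (by omega)]
  exact List.getElem_reverse _

lemma getD_map_range (f : ℕ → ℕ) {k i : ℕ} (h : i < k) :
    ((List.range k).map f).getD i 0 = f i := by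
  rw [List.getD_eq_getElem _ _ (by simpa using h)]
  simp

lemma sum_eZ (a : ℕ → ℕ) (k : ℕ) :
    ∑ i ∈ range k, eZ a k i * 10 ^ i
      = (∑ i ∈ range k, (a i : ℤ) * 10 ^ i)
        - (∑ i ∈ range k, (a (k - 1 - i) : ℤ) * 10 ^ i)
        + (borrow a k k : ℤ) * 10 ^ k := by
  have hc : ∀ i ∈ range k, eZ a k i * 10 ^ i
      = ((a i : ℤ) * 10 ^ i - (a (k - 1 - i) : ℤ) * 10 ^ i)
        + ((borrow a k (i + 1) : ℤ) * 10 ^ (i + 1) - (borrow a k i : ℤ) * 10 ^ i) := by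
    intro i _
    simp only [eZ]
    ring
  rw [Finset.sum_congr rfl hc, Finset.sum_add_distrib, Finset.sum_sub_distrib,
      Finset.sum_range_sub (fun i => (borrow a k i : ℤ) * 10 ^ i)]
  simp [borrow]

lemma sum_le_pow (f : ℕ → ℤ) (m : ℕ) (h9 : ∀ i, i < m → f i ≤ 9) :
    ∑ i ∈ range m, f i * 10 ^ i ≤ 10 ^ m - 1 := by
  have h1 : ∑ i ∈ range m, f i * 10 ^ i ≤ ∑ i ∈ range m, 9 * 10 ^ i := by
    apply Finset.sum_le_sum
    intro i hi
    exact mul_le_mul_of_nonneg_right (h9 i (mem_range.mp hi)) (by positivity)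
  have h2 : (∑ i ∈ range m, (10 : ℤ) ^ i) * (10 - 1) = 10 ^ m - 1 := geom_sum_mul 10 m
  rw [← Finset.mul_sum] at h1
  linarith

lemma key_identity (a : ℕ → ℕ) (k : ℕ) (hk : 1 ≤ k) (hbk : borrow a k k = 0) :
    (∑ i ∈ range k, eZ a k i * 10 ^ i) + (∑ i ∈ range k, eZ a k (k - 1 - i) * 10 ^ i)
      = 99 * ∑ i ∈ range (k - 1), (borrow a k (k - 1 - i) : ℤ) * 10 ^ i := by
  obtain ⟨j, rfl⟩ : ∃ j, k = j + 1 := ⟨k - 1, by omega⟩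
  set b := borrow a (j + 1) with hb
  have hstep : ∀ i ∈ range (j + 1),
      eZ a (j+1) i * 10 ^ i + eZ a (j+1) (j + 1 - 1 - i) * 10 ^ i
        = ((b (i + 1) : ℤ) * 10 ^ (i + 1) - (b i : ℤ) * 10 ^ i)
          + (10 * (b (j + 1 - i) : ℤ) * 10 ^ i - (b (j - i) : ℤ) * 10 ^ i) := by
    intro i hi
    rw [mem_range] at hi
    have h1 : j + 1 - 1 - (j + 1 - 1 - i) = i := by omega
    have h2 : j + 1 - 1 - i + 1 = j + 1 - i := by omega
    have h3 : j + 1 - 1 - i = j - i := by omega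
    simp only [eZ, ← hb, h3]
    rw [show j + 1 - 1 - (j - i) = i from by omega, show j - i + 1 = j + 1 - i from by omega]
    ring
  rw [← Finset.sum_add_distrib, Finset.sum_congr rfl hstep, Finset.sum_add_distrib,
      Finset.sum_range_sub (fun i => (b i : ℤ) * 10 ^ i)]
  have hA : ∑ i ∈ range (j + 1), 10 * (b (j + 1 - i) : ℤ) * 10 ^ i
      = 100 * ∑ i ∈ range j, (b (j - i) : ℤ) * 10 ^ i := by
    rw [Finset.sum_range_succ' (fun i => 10 * (b (j + 1 - i) : ℤ) * 10 ^ i) j]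
    have : ∀ i ∈ range j, 10 * (b (j + 1 - (i + 1)) : ℤ) * 10 ^ (i + 1)
        = 100 * ((b (j - i) : ℤ) * 10 ^ i) := by
      intro i hi
      rw [show j + 1 - (i + 1) = j - i from by omega]
      ring
    rw [Finset.sum_congr rfl this, ← Finset.mul_sum]
    simp [hbk, ← hb]
  have hB : ∑ i ∈ range (j + 1), (b (j - i) : ℤ) * 10 ^ i
      = ∑ i ∈ range j, (b (j - i) : ℤ) * 10 ^ i := by
    rw [Finset.sum_range_succ]
    simp [hb, borrow]
  have hBsub : ∑ i ∈ range (j + 1), (10 * (b (j + 1 - i) : ℤ) * 10 ^ i - (b (j - i) : ℤ) * 10 ^ i)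
      = 100 * (∑ i ∈ range j, (b (j - i) : ℤ) * 10 ^ i)
        - ∑ i ∈ range j, (b (j - i) : ℤ) * 10 ^ i := by
    rw [Finset.sum_sub_distrib, hA, hB]
  rw [hBsub]
  have hb0 : b 0 = 0 := by simp [hb, borrow]
  have : ∀ i ∈ range j, (b (j + 1 - 1 - i) : ℤ) * 10 ^ i = (b (j - i) : ℤ) * 10 ^ i := by
    intro i hi; norm_num
  rw [show j + 1 - 1 = j from rfl]
  rw [hbk, hb0]
  ring

lemma getLast_map_range (f : ℕ → ℕ) {k : ℕ} (hk : 1 ≤ k)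
    (h : (List.range k).map f ≠ []) :
    ((List.range k).map f).getLast h = f (k - 1) := by
  rw [List.getLast_eq_getElem]
  simp only [List.length_map, List.length_range, List.getElem_map, List.getElem_range]

end PW

/-- no Papadakis–Webster binary string of even length `n` has
`B_{n/2} = 1` and `B_{n/2 - 1} = 0`, i.e. the digit pair `1 0` can never occur
at the two central positions (read from left to right) of an even-length PWBS. -/
theorem stmt5 (Q n : ℕ) (hQ : IsPWBS Q)
    (hn : (Nat.digits 10 Q).length = n) (heven : Even n) :
    ¬ ((Nat.digits 10 Q).getD (n / 2) 0 = 1 ∧ (Nat.digits 10 Q).getD (n / 2 - 1) 0 = 0) := by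
  rintro ⟨h1, h0⟩
  obtain ⟨F, ⟨D, hD0, hDrev, hlen, hF⟩, hQF⟩ := hQ
  set L := Nat.digits 10 D with hL
  set k := L.length with hk
  set a : ℕ → ℕ := fun i => L.getD i 0 with haa
  have ha9 : ∀ j, a j ≤ 9 := by
    intro j
    simp only [haa]
    by_cases hj : j < L.length
    · have hmem : L.getD j 0 ∈ L := by
        rw [List.getD_eq_getElem _ _ hj]; exact List.getElem_mem hj
      have := Nat.digits_lt_base (by norm_num) hmem
      omega
    · rw [List.getD_eq_default _ _ (by omega)]
      omega
  have hk1 : 1 ≤ k := by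
    rw [hk, hL]
    have : Nat.digits 10 D ≠ [] := Nat.digits_ne_nil_iff_ne_zero.mpr (by omega)
    exact List.length_pos_iff.mpr this
  have hk2 : 2 ≤ k := by
    by_contra hcon
    have hk1' : k = 1 := by omega
    obtain ⟨d, hd⟩ := List.length_eq_one_iff.mp (hk ▸ hk1')
    have : rev D = D := by
      rw [rev, ← hL, hd]
      simp only [List.reverse_singleton]
      rw [← hd, hL, Nat.ofDigits_digits]
    omega
  -- D and rev D as sums
  have hD : (D : ℤ) = ∑ i ∈ Finset.range k, (a i : ℤ) * 10 ^ i := by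
    conv_lhs => rw [← Nat.ofDigits_digits 10 D]
    rw [← hL, PW.ofDigits_int, ← hk]
  have hrevD : (rev D : ℤ) = ∑ i ∈ Finset.range k, (a (k - 1 - i) : ℤ) * 10 ^ i := by
    rw [rev, ← hL, PW.ofDigits_int]
    rw [List.length_reverse, ← hk]
    apply Finset.sum_congr rfl
    intro i hi
    rw [Finset.mem_range] at hi
    rw [PW.getD_reverse (by rw [← hk]; omega), ← hk]
  -- borrow at k is zero
  have hsum := PW.sum_eZ a k
  rw [← hD, ← hrevD] at hsum
  have hbk : PW.borrow a k k = 0 := by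
    by_contra hcon
    have hbk1 : PW.borrow a k k = 1 := by have := PW.borrow_le_one a k k; omega
    have hle : ∑ i ∈ Finset.range k, PW.eZ a k i * 10 ^ i ≤ 10 ^ k - 1 :=
      PW.sum_le_pow _ _ (fun i _ => PW.eZ_le a k i ha9)
    rw [hbk1] at hsum
    have hlt : (rev D : ℤ) < D := by exact_mod_cast hDrev
    push_cast at hsum
    have hpow : (0:ℤ) < 10 ^ k := by positivity
    omega
  rw [hbk] at hsum
  push_cast at hsum
  set E := D - rev D with hE
  have hEZ : (E : ℤ) = ∑ i ∈ Finset.range k, PW.eZ a k i * 10 ^ i := by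
    rw [hE]
    push_cast [Nat.cast_sub (le_of_lt hDrev)]
    omega
  have hE0 : E ≠ 0 := by omega
  have hElb : 10 ^ k ≤ 10 * E := by
    have := Nat.base_pow_length_digits_le 10 E (by norm_num) hE0
    rwa [hlen] at this
  -- top digit of E is ≥ 1
  have heZtop : 1 ≤ PW.eZ a k (k - 1) := by
    by_contra hcon
    have h0' : PW.eZ a k (k - 1) = 0 := le_antisymm (by omega) (PW.eZ_nonneg a k _ ha9)
    have hsplit := Finset.sum_range_succ (fun i => PW.eZ a k i * 10 ^ i) (k - 1)
    rw [show k - 1 + 1 = k from by omega] at hsplit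
    have hpeel : (E : ℤ) = ∑ i ∈ Finset.range (k - 1), PW.eZ a k i * 10 ^ i := by
      rw [hEZ, hsplit]
      simp only [h0']
      ring
    have hub : (E : ℤ) ≤ 10 ^ (k - 1) - 1 := by
      rw [hpeel]
      exact PW.sum_le_pow _ _ (fun i _ => PW.eZ_le a k i ha9)
    have hcast : (10:ℤ) ^ k ≤ 10 * E := by exact_mod_cast hElb
    have hkk : (10:ℤ) ^ k = 10 * 10 ^ (k - 1) := by
      rw [← pow_succ']
      congr 1
      omega
    omega
  -- leading borrow is 1
  have hab : a 0 < a (k - 1) := by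
    have hx : PW.eZ a k (k - 1)
        = (a (k-1) : ℤ) - a 0 - PW.borrow a k (k - 1) := by
      rw [PW.eZ, show k - 1 - (k - 1) = 0 from by omega,
          show k - 1 + 1 = k from by omega, hbk]
      push_cast
      ring
    rw [hx] at heZtop
    have := PW.borrow_le_one a k (k-1)
    omega
  have hb1 : PW.borrow a k 1 = 1 := by
    show PW.borrow a k (0 + 1) = 1
    rw [PW.borrow]
    simp only [PW.borrow, Nat.sub_zero, Nat.add_zero]
    exact if_pos hab
  -- the digit list of E
  set eN : ℕ → ℕ := fun i => (PW.eZ a k i).toNat with heN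
  have heNZ : ∀ i, (eN i : ℤ) = PW.eZ a k i := by
    intro i
    simp only [heN]
    exact Int.toNat_of_nonneg (PW.eZ_nonneg a k i ha9)
  set M : List ℕ := (List.range k).map eN with hM
  have hMlen : M.length = k := by simp [hM]
  have hMD : Nat.digits 10 E = M := by
    have hofd : Nat.ofDigits 10 M = E := by
      have : ((Nat.ofDigits 10 M : ℕ) : ℤ) = (E : ℤ) := by
        rw [PW.ofDigits_int, hMlen, hEZ]
        apply Finset.sum_congr rfl
        intro i hi
        rw [Finset.mem_range] at hi
        rw [hM, PW.getD_map_range eN hi, heNZ]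
      exact_mod_cast this
    rw [← hofd]
    apply Nat.digits_ofDigits 10 (by norm_num)
    · intro x hx
      rw [hM] at hx
      simp only [List.mem_map, List.mem_range] at hx
      obtain ⟨i, _, rfl⟩ := hx
      have hh1 := PW.eZ_le a k i ha9
      have hh2 := heNZ i
      omega
    · intro hne
      show ((List.range k).map eN).getLast hne ≠ 0
      rw [PW.getLast_map_range eN hk1]
      have hh2 := heNZ (k - 1)
      intro hzero
      rw [hzero] at hh2
      omega
  -- rev E as a sum
  have hrevE : ((rev E : ℕ) : ℤ)
      = ∑ i ∈ Finset.range k, PW.eZ a k (k - 1 - i) * 10 ^ i := by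
    rw [rev, hMD, PW.ofDigits_int, List.length_reverse, hMlen]
    apply Finset.sum_congr rfl
    intro i hi
    rw [Finset.mem_range] at hi
    rw [PW.getD_reverse (by rw [hMlen]; omega), hMlen]
    rw [hM, PW.getD_map_range eN (by omega), heNZ]
  -- F = 99 * P
  have hFZ : (F : ℤ)
      = 99 * ∑ i ∈ Finset.range (k - 1), (PW.borrow a k (k - 1 - i) : ℤ) * 10 ^ i := by
    rw [hF]
    push_cast
    rw [hEZ, hrevE]
    exact PW.key_identity a k (by omega) hbk
  set P : ℕ := ∑ i ∈ Finset.range (k - 1), PW.borrow a k (k - 1 - i) * 10 ^ i with hP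
  have hF99 : F = 99 * P := by
    have : (F : ℤ) = ((99 * P : ℕ) : ℤ) := by
      rw [hFZ, hP]
      push_cast
      ring
    exact_mod_cast this
  have hQP : Q = P := by
    rw [hQF, hF99, Nat.mul_div_cancel_left _ (by norm_num)]
  -- digits of Q
  set M2 : List ℕ := (List.range (k - 1)).map (fun i => PW.borrow a k (k - 1 - i)) with hM2
  have hM2len : M2.length = k - 1 := by simp [hM2]
  have hQdig : Nat.digits 10 Q = M2 := by
    have hofd : Nat.ofDigits 10 M2 = Q := by
      have : ((Nat.ofDigits 10 M2 : ℕ) : ℤ) = (Q : ℤ) := by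
        rw [PW.ofDigits_int, hM2len, hQP, hP]
        push_cast
        apply Finset.sum_congr rfl
        intro i hi
        rw [Finset.mem_range] at hi
        rw [hM2, PW.getD_map_range _ hi]
      exact_mod_cast this
    rw [← hofd]
    apply Nat.digits_ofDigits 10 (by norm_num)
    · intro x hx
      rw [hM2] at hx
      simp only [List.mem_map, List.mem_range] at hx
      obtain ⟨i, _, rfl⟩ := hx
      have := PW.borrow_le_one a k (k - 1 - i)
      omega
    · intro hne
      show ((List.range (k - 1)).map (fun i => PW.borrow a k (k - 1 - i))).getLast hne ≠ 0
      rw [PW.getLast_map_range _ (show 1 ≤ k - 1 from by omega)]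
      rw [show k - 1 - (k - 1 - 1) = 1 from by omega, hb1]
      norm_num
  -- n = k - 1
  have hnk : n = k - 1 := by rw [← hn, hQdig, hM2len]
  obtain ⟨m, hm⟩ := heven
  have hm1 : 1 ≤ m := by omega
  have hn2 : n / 2 = m := by omega
  have hn21 : n / 2 - 1 = m - 1 := by omega
  -- extract the two central digits
  have hc1 : PW.borrow a k m = 1 := by
    rw [hQdig, hn2] at h1
    rw [hM2, PW.getD_map_range _ (show m < k - 1 from by omega)] at h1
    rw [show k - 1 - m = m from by omega] at h1
    exact h1
  have hc0 : PW.borrow a k (m + 1) = 0 := by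
    rw [hQdig, hn21] at h0
    rw [hM2, PW.getD_map_range _ (show m - 1 < k - 1 from by omega)] at h0
    rw [show k - 1 - (m - 1) = m + 1 from by omega] at h0
    exact h0
  -- but the middle borrow propagates: borrow (m+1) = borrow m
  have hmid : PW.borrow a k (m + 1) = 1 := by
    rw [PW.borrow]
    rw [show k - 1 - m = m from by omega]
    rw [hc1]
    rw [if_pos (by omega)]
  omega
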